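/- Fix a nonzero integer a and a large integer z. The number of SL₂(ℤ)-equivalence classes of primitive integral binary quadratic forms of discriminant -4a² which represent z is ≪_ε z^ε · (z, 4a²)^{1/2} for any ε > 0. -/

import Mathlib

/-- Evaluation of the binary quadratic form `(A,B,C) ↦ Ax² + 2Bxy + Cy²`. -/
def evalBQF (f : ℤ × ℤ × ℤ) (x y : ℤ) : ℤ :=
  f.1 * x ^ 2 + 2 * f.2.1 * x * y + f.2.2 * y ^ 2

/-- `SL₂(ℤ)`-equivalence of binary quadratic forms. -/
def SL2Equiv (f g : ℤ × ℤ × ℤ) : Prop :=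
  ∃ p q r s : ℤ, p * s - q * r = 1 ∧
    ∀ x y : ℤ, evalBQF g x y = evalBQF f (p * x + q * y) (r * x + s * y)

lemma sl2_trans {f g h : ℤ × ℤ × ℤ} (h1 : SL2Equiv f g) (h2 : SL2Equiv g h) :
    SL2Equiv f h := by
  obtain ⟨p, q, r, s, hd, he⟩ := h1
  obtain ⟨p', q', r', s', hd', he'⟩ := h2
  refine ⟨p*p' + q*r', p*q' + q*s', r*p' + s*r', r*q' + s*s',
    by linear_combination (p'*s' - q'*r') * hd + hd', fun x y => ?_⟩
  rw [he' x y, he (p'*x + q'*y) (r'*x + s'*y)]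
  simp only [evalBQF]; ring

lemma sl2_symm {f g : ℤ × ℤ × ℤ} (h : SL2Equiv f g) : SL2Equiv g f := by
  obtain ⟨p, q, r, s, hd, he⟩ := h
  refine ⟨s, -q, -r, p, by linarith, fun x y => ?_⟩
  rw [he (s*x + -q*y) (-r*x + p*y)]
  simp only [evalBQF]
  linear_combination (-(p*s - q*r + 1) * (f.1*x^2 + 2*f.2.1*x*y + f.2.2*y^2)) * hd

lemma sl2_coeffs {f g : ℤ × ℤ × ℤ} (h : SL2Equiv f g) :
    ∃ p q r s : ℤ, p*s - q*r = 1 ∧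
      g.1 = f.1*p^2 + 2*f.2.1*p*r + f.2.2*r^2 ∧
      g.2.1 = f.1*p*q + f.2.1*(p*s + q*r) + f.2.2*r*s ∧
      g.2.2 = f.1*q^2 + 2*f.2.1*q*s + f.2.2*s^2 := by
  obtain ⟨p, q, r, s, hd, he⟩ := h
  have h1 := he 1 0; have h2 := he 0 1; have h3 := he 1 1
  simp only [evalBQF] at h1 h2 h3
  refine ⟨p, q, r, s, hd, by linear_combination h1, ?_, by linear_combination h2⟩
  have h4 : 2*g.2.1 = 2*(f.1*p*q + f.2.1*(p*s + q*r) + f.2.2*r*s) := by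
    linear_combination h3 - h1 - h2
  linarith

lemma sl2_disc {f g : ℤ × ℤ × ℤ} (h : SL2Equiv f g) :
    g.2.1^2 - g.1*g.2.2 = f.2.1^2 - f.1*f.2.2 := by
  obtain ⟨p, q, r, s, hd, e1, e2, e3⟩ := sl2_coeffs h
  rw [e1, e2, e3]
  linear_combination ((f.2.1^2 - f.1*f.2.2) * (p*s - q*r + 1)) * hd

lemma sl2_gcd {f g : ℤ × ℤ × ℤ} (h : SL2Equiv f g)
    (hf : Int.gcd f.1 (Int.gcd f.2.1 f.2.2) = 1) :
    Int.gcd g.1 (Int.gcd g.2.1 g.2.2) = 1 := by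
  obtain ⟨p, q, r, s, hd, e1, e2, e3⟩ := sl2_coeffs (sl2_symm h)
  set e : ℕ := Int.gcd g.1 (Int.gcd g.2.1 g.2.2) with he
  have h1 : (e:ℤ) ∣ g.1 := Int.gcd_dvd_left _ _
  have h2 : (e:ℤ) ∣ g.2.1 := dvd_trans (Int.gcd_dvd_right _ _) (Int.gcd_dvd_left _ _)
  have h3 : (e:ℤ) ∣ g.2.2 := dvd_trans (Int.gcd_dvd_right _ _) (Int.gcd_dvd_right _ _)
  have d1 : (e:ℤ) ∣ f.1 := by
    rw [e1]; exact dvd_add (dvd_add (h1.mul_right _) (((h2.mul_left _).mul_right _).mul_right _))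
      (h3.mul_right _)
  have d2 : (e:ℤ) ∣ f.2.1 := by
    rw [e2]; exact dvd_add (dvd_add ((h1.mul_right _).mul_right _) (h2.mul_right _))
      ((h3.mul_right _).mul_right _)
  have d3 : (e:ℤ) ∣ f.2.2 := by
    rw [e3]; exact dvd_add (dvd_add (h1.mul_right _) (((h2.mul_left _).mul_right _).mul_right _))
      (h3.mul_right _)
  have hd1 : (e:ℤ) ∣ (Int.gcd f.1 (Int.gcd f.2.1 f.2.2) : ℤ) :=
    Int.dvd_coe_gcd d1 (Int.dvd_coe_gcd d2 d3)
  rw [hf] at hd1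
  exact Nat.dvd_one.mp (by exact_mod_cast hd1)

lemma exists_normal_form (a z : ℤ) (hz : 0 < z)
    (f : ℤ × ℤ × ℤ)
    (hdisc : f.2.1 ^ 2 - f.1 * f.2.2 = -a ^ 2)
    (m n : ℤ) (hrep : evalBQF f m n = z) :
    ∃ d b : ℤ, 0 < d ∧ d^2 ∣ z ∧ 0 ≤ b ∧ b < z / d^2 ∧ (z / d^2) ∣ b^2 + a^2 ∧
      SL2Equiv f (z / d^2, b, (b^2 + a^2) / (z / d^2)) := by
  have hmn : Int.gcd m n ≠ 0 := by
    intro h0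
    obtain ⟨hm0, hn0⟩ := Int.gcd_eq_zero_iff.mp h0
    rw [hm0, hn0] at hrep
    simp [evalBQF] at hrep
    omega
  have hd0 : 0 < (Int.gcd m n : ℤ) := by exact_mod_cast Nat.pos_of_ne_zero hmn
  set d : ℤ := (Int.gcd m n : ℤ) with hdval
  set m₀ : ℤ := m / d with hm₀
  set n₀ : ℤ := n / d with hn₀
  have hm : d * m₀ = m := Int.mul_ediv_cancel' (Int.gcd_dvd_left _ _)
  have hn : d * n₀ = n := Int.mul_ediv_cancel' (Int.gcd_dvd_right _ _)
  have hco : Int.gcd m₀ n₀ = 1 := Int.gcd_div_gcd_div_gcd (Nat.pos_of_ne_zero hmn)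
  set z' : ℤ := evalBQF f m₀ n₀ with hz'
  have hz2 : z = d^2 * z' := by
    rw [← hrep, ← hm, ← hn]
    simp only [evalBQF, hz']
    ring
  have hdvd : d^2 ∣ z := ⟨z', hz2⟩
  have hz'pos : 0 < z' := by nlinarith [sq_nonneg d]
  have hzdiv : z / d^2 = z' := by
    rw [hz2]; exact Int.mul_ediv_cancel_left _ (by positivity)
  -- Bezout
  obtain ⟨u, v, huv⟩ := Int.isCoprime_iff_gcd_eq_one.mpr hco
  set p : ℤ := m₀
  set r : ℤ := n₀
  set s : ℤ := u
  set q : ℤ := -v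
  have hdet : p * s - q * r = 1 := by simp only [p, q, r, s]; linarith [huv]
  set B₁ : ℤ := f.1*p*q + f.2.1*(p*s + q*r) + f.2.2*r*s with hB₁
  set C₁ : ℤ := evalBQF f q s with hC₁
  have heq1 : SL2Equiv f (z', B₁, C₁) := by
    refine ⟨p, q, r, s, hdet, fun x y => ?_⟩
    simp only [evalBQF, hz', hB₁, hC₁]
    ring
  set t : ℤ := -(B₁ / z') with ht
  set b : ℤ := B₁ % z' with hb
  have hbt : b = B₁ + z' * t := by
    rw [hb, ht, Int.emod_def]; ring
  set C₂ : ℤ := C₁ + 2*B₁*t + z'*t^2 with hC₂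
  have heq2 : SL2Equiv (z', B₁, C₁) (z', b, C₂) := by
    refine ⟨1, t, 0, 1, by ring, fun x y => ?_⟩
    simp only [evalBQF]
    rw [hbt, hC₂]
    ring
  have heq : SL2Equiv f (z', b, C₂) := sl2_trans heq1 heq2
  have hdisc2 : b^2 - z' * C₂ = -a^2 := by
    have := sl2_disc heq
    simp only at this
    rw [hdisc] at this
    linarith
  have hzC : z' * C₂ = b^2 + a^2 := by linarith
  have hdvd2 : z' ∣ b^2 + a^2 := ⟨C₂, hzC.symm⟩
  have hC₂eq : (b^2 + a^2) / z' = C₂ := by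
    rw [← hzC, Int.mul_ediv_cancel_left _ (ne_of_gt hz'pos)]
  refine ⟨d, b, hd0, hdvd, Int.emod_nonneg _ (ne_of_gt hz'pos),
    by rw [hzdiv]; exact Int.emod_lt_of_pos _ hz'pos, by rw [hzdiv]; exact hdvd2, ?_⟩
  rw [hzdiv, hC₂eq]
  exact heq

lemma sol_bound (n aa : ℤ) (hn : 0 < n) :
    ((Finset.Ico (0:ℤ) n).filter (fun b => n ∣ b^2 + aa^2)).card ≤
      n.toNat.divisors.card * (2 * Nat.sqrt (Int.gcd n (4*aa^2))) := by
  classical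
  set G : ℕ := Int.gcd n (4*aa^2) with hG
  set Sol : Finset ℤ := (Finset.Ico (0:ℤ) n).filter (fun b => n ∣ b^2 + aa^2) with hSol
  rcases Sol.eq_empty_or_nonempty with hemp | ⟨x₀, hx₀⟩
  · rw [hemp]; simp
  have hx₀m := Finset.mem_filter.mp hx₀
  have hx₀r : 0 ≤ x₀ ∧ x₀ < n := Finset.mem_Ico.mp hx₀m.1
  have hx₀d : n ∣ x₀^2 + aa^2 := hx₀m.2
  have hnt : n.toNat ≠ 0 := by omega
  have hnat : (n.toNat : ℤ) = n := Int.toNat_of_nonneg hn.le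
  -- split by gcd value
  have hsub : Sol ⊆ n.toNat.divisors.biUnion
      (fun e => Sol.filter (fun x => Int.gcd (x - x₀) n = e)) := by
    intro x hx
    rw [Finset.mem_biUnion]
    refine ⟨Int.gcd (x - x₀) n, Nat.mem_divisors.mpr ⟨?_, hnt⟩,
      Finset.mem_filter.mpr ⟨hx, rfl⟩⟩
    have h1 : Int.gcd (x - x₀) n ∣ n.natAbs := Nat.gcd_dvd_right _ _
    have h2 : n.natAbs = n.toNat := by omega
    rwa [h2] at h1
  have hcard : Sol.card ≤ ∑ e ∈ n.toNat.divisors,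
      (Sol.filter (fun x => Int.gcd (x - x₀) n = e)).card :=
    le_trans (Finset.card_le_card hsub) Finset.card_biUnion_le
  -- per-divisor bound
  have hper : ∀ e ∈ n.toNat.divisors,
      (Sol.filter (fun x => Int.gcd (x - x₀) n = e)).card ≤ 2 * Nat.sqrt G := by
    intro e hedvd
    set T : Finset ℤ := Sol.filter (fun x => Int.gcd (x - x₀) n = e) with hT
    rcases T.eq_empty_or_nonempty with hemp | ⟨x₁, hx₁⟩
    · rw [hemp]; simp
    have he0 : 0 < e := Nat.pos_of_mem_divisors hedvd
    set E : ℤ := (e : ℤ) with hE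
    have hE0 : 0 < E := by rw [hE]; exact_mod_cast he0
    -- basic facts about members of T
    have hmem : ∀ x ∈ T, (0 ≤ x ∧ x < n) ∧ n ∣ x^2 + aa^2 ∧ Int.gcd (x - x₀) n = e := by
      intro x hx
      have h1 := Finset.mem_filter.mp hx
      have h2 := Finset.mem_filter.mp h1.1
      exact ⟨Finset.mem_Ico.mp h2.1, h2.2, h1.2⟩
    have hEdvdn : E ∣ n := by
      obtain ⟨_, _, hg⟩ := hmem x₁ hx₁
      rw [hE, ← hg]; exact Int.gcd_dvd_right _ _
    set n' : ℤ := n / E with hn'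
    have hEn' : E * n' = n := Int.mul_ediv_cancel' hEdvdn
    have hn'0 : 0 < n' := by nlinarith
    have claim1 : ∀ x ∈ T, E ∣ x - x₀ := by
      intro x hx
      obtain ⟨_, _, hg⟩ := hmem x hx
      rw [hE, ← hg]; exact Int.gcd_dvd_left _ _
    have claim2 : ∀ x ∈ T, n' ∣ x + x₀ := by
      intro x hx
      obtain ⟨_, hdx, hg⟩ := hmem x hx
      have hprod : n ∣ (x - x₀) * (x + x₀) := by
        have := dvd_sub hdx hx₀d
        rwa [show x^2 + aa^2 - (x₀^2 + aa^2) = (x - x₀) * (x + x₀) by ring] at this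
      set u : ℤ := x - x₀ with hu
      have hgpos : 0 < Int.gcd u n := by rw [hg]; exact he0
      have hco : Int.gcd (u / E) (n / E) = 1 := by
        have := Int.gcd_div_gcd_div_gcd hgpos
        rwa [hg] at this
      have hEu : E * (u / E) = u := by
        apply Int.mul_ediv_cancel'
        rw [hE, ← hg]; exact Int.gcd_dvd_left _ _
      have hdvd' : n' ∣ (u / E) * (x + x₀) := by
        have h2 : E * n' ∣ E * ((u / E) * (x + x₀)) := by
          rw [hEn', ← mul_assoc, hEu]; exact hprod
        exact (mul_dvd_mul_iff_left (ne_of_gt hE0)).mp h2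
      have hcop : IsCoprime n' (u / E) := by
        rw [Int.isCoprime_iff_gcd_eq_one, Int.gcd_comm]
        rw [hn']; exact hco
      exact hcop.dvd_of_dvd_mul_left hdvd'
    set m : ℕ := Int.gcd E n' with hm
    set M : ℤ := (m : ℤ) with hM
    have hm0 : 0 < m := by
      rw [hm]
      rcases Nat.eq_zero_or_pos (Int.gcd E n') with h | h
      · exfalso; exact (ne_of_gt hE0) (Int.gcd_eq_zero_iff.mp h).1
      · exact h
    have hM0 : 0 < M := by rw [hM]; exact_mod_cast hm0
    have hME : M ∣ E := Int.gcd_dvd_left _ _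
    have hMn' : M ∣ n' := Int.gcd_dvd_right _ _
    have hMn : M^2 ∣ n := by
      rw [← hEn', sq]; exact mul_dvd_mul hME hMn'
    have hM2x : M ∣ 2*x₁ := by
      have h1 := dvd_add (dvd_trans hME (claim1 x₁ hx₁)) (dvd_trans hMn' (claim2 x₁ hx₁))
      rwa [show x₁ - x₀ + (x₁ + x₀) = 2*x₁ by ring] at h1
    have hM4a : M^2 ∣ 4*aa^2 := by
      have h1 : M^2 ∣ 4*(x₁^2 + aa^2) := by
        obtain ⟨_, hdx, _⟩ := hmem x₁ hx₁
        exact dvd_trans hMn (hdx.mul_left 4)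
      have h2 : M^2 ∣ (2*x₁)^2 := pow_dvd_pow_of_dvd hM2x 2
      have := dvd_sub h1 h2
      rwa [show 4*(x₁^2 + aa^2) - (2*x₁)^2 = 4*aa^2 by ring] at this
    have hmG : m ≤ Nat.sqrt G := by
      rw [Nat.le_sqrt]
      have hdG : (M^2 : ℤ) ∣ (G : ℤ) := Int.dvd_coe_gcd hMn hM4a
      have hGpos : (0:ℤ) < (G:ℤ) := by
        have : G ≠ 0 := fun h => (ne_of_gt hn) (Int.gcd_eq_zero_iff.mp h).1
        exact_mod_cast Nat.pos_of_ne_zero this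
      have hle := Int.le_of_dvd hGpos hdG
      rw [hM] at hle
      exact_mod_cast (show ((m:ℤ)) * (m:ℤ) ≤ (G:ℤ) by nlinarith [hle])
    set L : ℤ := (Int.lcm E n' : ℤ) with hL
    have hML : M * L = n := by
      have h1 : Int.gcd E n' * Int.lcm E n' = (E * n').natAbs := by rw [Int.gcd_mul_lcm, Int.natAbs_mul]
      have h2 : ((E * n').natAbs : ℤ) = E * n' := Int.natAbs_of_nonneg (by positivity)
      have : (M : ℤ) * L = ((Int.gcd E n' * Int.lcm E n' : ℕ) : ℤ) := by push_cast [hM, hL, hm]; ring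
      rw [this, h1, h2, hEn']
    have hL0 : 0 < L := by nlinarith
    have claim3 : ∀ x ∈ T, L ∣ x - x₁ := by
      intro x hx
      apply Int.coe_lcm_dvd
      · have := dvd_sub (claim1 x hx) (claim1 x₁ hx₁)
        rwa [show x - x₀ - (x₁ - x₀) = x - x₁ by ring] at this
      · have := dvd_sub (claim2 x hx) (claim2 x₁ hx₁)
        rwa [show x + x₀ - (x₁ + x₀) = x - x₁ by ring] at this
    -- injection into Ioo (-M) M
    have hinj : T.card ≤ (Finset.Ioo (-M) M).card := by
      apply Finset.card_le_card_of_injOn (fun x => (x - x₁) / L)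
      · intro x hx
        obtain ⟨⟨hx0, hxn⟩, _, _⟩ := hmem x hx
        obtain ⟨⟨hx10, hx1n⟩, _, _⟩ := hmem x₁ hx₁
        have hdvd := claim3 x hx
        have heq : L * ((x - x₁) / L) = x - x₁ := Int.mul_ediv_cancel' hdvd
        rw [Finset.mem_coe, Finset.mem_Ioo]
        constructor
        · nlinarith [heq]
        · nlinarith [heq]
      · intro x hx y hy hxy
        have h1 : L * ((x - x₁) / L) = x - x₁ := Int.mul_ediv_cancel' (claim3 x hx)
        have h2 : L * ((y - x₁) / L) = y - x₁ := Int.mul_ediv_cancel' (claim3 y hy)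
        simp only at hxy
        rw [hxy] at h1
        omega
    have hIoo : (Finset.Ioo (-M) M).card = 2*m - 1 := by
      rw [Int.card_Ioo]
      omega
    omega
  calc Sol.card ≤ ∑ e ∈ n.toNat.divisors,
        (Sol.filter (fun x => Int.gcd (x - x₀) n = e)).card := hcard
    _ ≤ ∑ _e ∈ n.toNat.divisors, 2 * Nat.sqrt G := Finset.sum_le_sum hper
    _ = n.toNat.divisors.card * (2 * Nat.sqrt G) := by rw [Finset.sum_const, smul_eq_mul]

lemma tau_bound (δ : ℝ) (hδ : 0 < δ) :
    ∃ K : ℝ, 1 ≤ K ∧ ∀ n : ℕ, n ≠ 0 → (n.divisors.card : ℝ) ≤ K * (n:ℝ)^δ := by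
  classical
  set x : ℝ := (2:ℝ)^δ - 1 with hx
  have h2δ : (1:ℝ) < (2:ℝ)^δ := Real.one_lt_rpow_iff_of_pos (by norm_num) |>.mpr (Or.inl ⟨by norm_num, hδ⟩)
  have hx0 : 0 < x := by rw [hx]; linarith
  set C : ℝ := max 1 (1/x) with hC
  have hC1 : 1 ≤ C := le_max_left _ _
  have hCx : 1 ≤ C * x := by
    have h1 : 1/x ≤ C := le_max_right _ _
    calc (1:ℝ) = (1/x) * x := by field_simp
      _ ≤ C * x := mul_le_mul_of_nonneg_right h1 hx0.le
  set N₀ : ℕ := ⌈(2:ℝ)^(1/δ)⌉₊ + 1 with hN₀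
  have hbig : ∀ p : ℕ, N₀ ≤ p → (2:ℝ) ≤ (p:ℝ)^δ := by
    intro p hp
    have h1 : (2:ℝ)^(1/δ) ≤ (p:ℝ) := by
      calc (2:ℝ)^(1/δ) ≤ (⌈(2:ℝ)^(1/δ)⌉₊ : ℝ) := Nat.le_ceil _
        _ ≤ (p:ℝ) := by exact_mod_cast le_trans (Nat.le_succ _) hp
    calc (2:ℝ) = ((2:ℝ)^(1/δ))^δ := by
          rw [← Real.rpow_mul (by norm_num : (0:ℝ) ≤ 2), one_div_mul_cancel (ne_of_gt hδ),
            Real.rpow_one]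
      _ ≤ (p:ℝ)^δ := Real.rpow_le_rpow (by positivity) h1 hδ.le
  -- per prime-power factor bound
  have hfactor : ∀ p k : ℕ, 2 ≤ p → 1 ≤ k →
      ((k:ℝ) + 1) ≤ (if p < N₀ then C else 1) * ((p:ℝ)^k)^δ := by
    intro p k hp hk
    have hppos : (0:ℝ) < (p:ℝ) := by positivity
    have hpkδ : ((p:ℝ)^k)^δ = ((p:ℝ)^δ)^k := by
      rw [← Real.rpow_natCast (p:ℝ) k, ← Real.rpow_mul hppos.le, mul_comm,
        Real.rpow_mul hppos.le, Real.rpow_natCast]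
    split_ifs with hsmall
    · -- small prime: Bernoulli
      have h2p : ((2:ℝ))^δ ≤ (p:ℝ)^δ :=
        Real.rpow_le_rpow (by norm_num) (by exact_mod_cast hp) hδ.le
      have hbern : 1 + (k:ℝ)*x ≤ ((2:ℝ)^δ)^k := by
        have := one_add_mul_le_pow (a := x) (by linarith) k
        rwa [hx, show (1:ℝ) + ((2:ℝ)^δ - 1) = (2:ℝ)^δ by ring] at this
      have hmono : ((2:ℝ)^δ)^k ≤ ((p:ℝ)^δ)^k :=
        pow_le_pow_left₀ (by positivity) h2p k
      have hkey : (k:ℝ) + 1 ≤ C * (1 + (k:ℝ)*x) := by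
        have hk0 : (0:ℝ) ≤ (k:ℝ) := by positivity
        nlinarith [mul_nonneg hk0 (by linarith : (0:ℝ) ≤ C*x - 1)]
      calc ((k:ℝ) + 1) ≤ C * (1 + (k:ℝ)*x) := hkey
        _ ≤ C * ((p:ℝ)^k)^δ := by
            apply mul_le_mul_of_nonneg_left _ (by linarith)
            rw [hpkδ]; exact le_trans hbern hmono
    · -- large prime
      push_neg at hsmall
      have h2p : (2:ℝ) ≤ (p:ℝ)^δ := hbig p hsmall
      have h1 : ((k:ℝ) + 1) ≤ (2:ℝ)^k := by
        have := Nat.lt_two_pow_self (n := k)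
        exact_mod_cast Nat.succ_le_of_lt this
      have h2 : ((2:ℝ))^k ≤ ((p:ℝ)^δ)^k := pow_le_pow_left₀ (by norm_num) h2p k
      rw [one_mul, hpkδ]
      linarith
  refine ⟨C^N₀, one_le_pow₀ hC1, fun n hn => ?_⟩
  have hcard : (n.divisors.card : ℝ) = ∏ p ∈ n.primeFactors, ((n.factorization p : ℝ) + 1) := by
    rw [Nat.card_divisors hn]
    push_cast
    rfl
  have hn' : ((n:ℝ))^δ = ∏ p ∈ n.primeFactors, ((p:ℝ)^(n.factorization p))^δ := by
    rw [Real.finset_prod_rpow _ _ (fun i _ => by positivity) δ]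
    congr 1
    conv_lhs => rw [← Nat.factorization_prod_pow_eq_self hn]
    rw [Finsupp.prod]
    push_cast
    rw [Nat.support_factorization]
  have hstep : (n.divisors.card : ℝ) ≤
      (∏ p ∈ n.primeFactors, (if p < N₀ then C else 1)) * ((n:ℝ))^δ := by
    rw [hcard, hn', ← Finset.prod_mul_distrib]
    apply Finset.prod_le_prod
    · intro p _; positivity
    · intro p hp
      exact hfactor p (n.factorization p) (Nat.prime_of_mem_primeFactors hp).two_le
        (Nat.Prime.factorization_pos_of_dvd (Nat.prime_of_mem_primeFactors hp) hn
          (Nat.dvd_of_mem_primeFactors hp))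
  have hprodC : (∏ p ∈ n.primeFactors, (if p < N₀ then C else 1)) ≤ C^N₀ := by
    rw [Finset.prod_ite, Finset.prod_const, Finset.prod_const, one_pow, mul_one]
    apply pow_le_pow_right₀ hC1
    calc (n.primeFactors.filter (· < N₀)).card ≤ (Finset.range N₀).card :=
          Finset.card_le_card (fun p hp => Finset.mem_range.mpr (Finset.mem_filter.mp hp).2)
      _ = N₀ := Finset.card_range _
  calc (n.divisors.card : ℝ) ≤ _ := hstep
    _ ≤ C^N₀ * ((n:ℝ))^δ := by
        apply mul_le_mul_of_nonneg_right hprodC (by positivity)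

lemma card_bound (a z : ℤ) (hz : 0 < z) :
    Nat.card (Quot (fun f g : { f : ℤ × ℤ × ℤ //
        Int.gcd f.1 (Int.gcd f.2.1 f.2.2) = 1 ∧
        f.2.1 ^ 2 - f.1 * f.2.2 = -a ^ 2 ∧
        ∃ m n : ℤ, evalBQF f m n = z } => SL2Equiv f.1 g.1)) ≤
      z.toNat.divisors.card * (z.toNat.divisors.card *
        (2 * Nat.sqrt (Int.gcd z (4*a^2)))) := by
  classical
  set P : ℤ × ℤ × ℤ → Prop := fun f =>
    Int.gcd f.1 (Int.gcd f.2.1 f.2.2) = 1 ∧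
    f.2.1 ^ 2 - f.1 * f.2.2 = -a ^ 2 ∧
    ∃ m n : ℤ, evalBQF f m n = z with hP
  set r : {f // P f} → {f // P f} → Prop := fun f g => SL2Equiv f.1 g.1 with hr
  set F : Finset (ℤ × ℤ) := (Finset.Icc 1 z ×ˢ Finset.Ico 0 z).filter
    (fun p : ℤ × ℤ => p.1^2 ∣ z ∧ p.2 < z / p.1^2 ∧ (z / p.1^2) ∣ p.2^2 + a^2) with hFdef
  -- Step 1: Nat.card (Quot r) ≤ F.card
  have key : ∀ f : {f // P f}, ∃ db : ℤ × ℤ, 0 < db.1 ∧ db.1^2 ∣ z ∧ 0 ≤ db.2 ∧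
      db.2 < z / db.1^2 ∧ (z / db.1^2) ∣ db.2^2 + a^2 ∧
      SL2Equiv f.1 (z / db.1^2, db.2, (db.2^2 + a^2) / (z / db.1^2)) := by
    rintro ⟨f, hprim, hdisc, m, n, hrep⟩
    obtain ⟨d, b, h⟩ := exists_normal_form a z hz f hdisc m n hrep
    exact ⟨(d, b), h⟩
  choose Φ hΦ using key
  have hstdP : ∀ f : {f // P f},
      P (z / (Φ f).1^2, (Φ f).2, ((Φ f).2^2 + a^2) / (z / (Φ f).1^2)) := by
    intro f
    obtain ⟨hd0, hdvd, hb0, hblt, hbdvd, hequiv⟩ := hΦ f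
    have hz'c : (z / (Φ f).1^2) * (((Φ f).2^2 + a^2) / (z / (Φ f).1^2)) =
        (Φ f).2^2 + a^2 := Int.mul_ediv_cancel' hbdvd
    refine ⟨sl2_gcd hequiv f.2.1, by simp only; linarith, (Φ f).1, 0, ?_⟩
    simp only [evalBQF]
    have := Int.ediv_mul_cancel hdvd
    nlinarith [this]
  have hclass : ∀ f : {f // P f}, Quot.mk r f =
      Quot.mk r ⟨(z / (Φ f).1^2, (Φ f).2, ((Φ f).2^2 + a^2) / (z / (Φ f).1^2)), hstdP f⟩ :=
    fun f => Quot.sound (hΦ f).2.2.2.2.2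
  have hmemF : ∀ f : {f // P f}, Φ f ∈ F := by
    intro f
    obtain ⟨hd0, hdvd, hb0, hblt, hbdvd, -⟩ := hΦ f
    have hz' : (z / (Φ f).1^2) * (Φ f).1^2 = z := Int.ediv_mul_cancel hdvd
    have hz'pos : 0 < z / (Φ f).1^2 := by nlinarith
    have hd2 : (1:ℤ) ≤ (Φ f).1^2 := by nlinarith
    rw [hFdef, Finset.mem_filter, Finset.mem_product, Finset.mem_Icc, Finset.mem_Ico]
    refine ⟨⟨⟨hd0, ?_⟩, hb0, ?_⟩, hdvd, hblt, hbdvd⟩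
    · nlinarith
    · nlinarith
  set ψ : Quot r → {x // x ∈ F} := fun qq =>
    ⟨Φ (Classical.choose (Quot.exists_rep qq)), hmemF _⟩ with hψ
  have hinj : Function.Injective ψ := by
    intro q1 q2 heq
    have h1 : Quot.mk r (Classical.choose (Quot.exists_rep q1)) = q1 :=
      Classical.choose_spec (Quot.exists_rep q1)
    have h2 : Quot.mk r (Classical.choose (Quot.exists_rep q2)) = q2 :=
      Classical.choose_spec (Quot.exists_rep q2)
    have hv : Φ (Classical.choose (Quot.exists_rep q1)) =
        Φ (Classical.choose (Quot.exists_rep q2)) := congrArg Subtype.val heq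
    have e1 := hclass (Classical.choose (Quot.exists_rep q1))
    have e2 := hclass (Classical.choose (Quot.exists_rep q2))
    have hmid : Quot.mk r ⟨_, hstdP (Classical.choose (Quot.exists_rep q1))⟩ =
        Quot.mk r ⟨_, hstdP (Classical.choose (Quot.exists_rep q2))⟩ :=
      congrArg (Quot.mk r) (Subtype.ext (congrArg (fun db : ℤ × ℤ =>
        ((z / db.1^2, db.2, (db.2^2 + a^2) / (z / db.1^2)) : ℤ × ℤ × ℤ)) hv))
    rw [← h1, ← h2, e1, e2, hmid]
  calc Nat.card (Quot r) ≤ Nat.card {x // x ∈ F} := Nat.card_le_card_of_injective ψ hinj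
    _ = F.card := Nat.card_eq_finsetCard F
    _ ≤ _ := ?_
  -- Step 2: counting
  set Ds : Finset ℤ := (Finset.Icc 1 z).filter (fun d => d^2 ∣ z) with hDs
  set Sol : ℤ → Finset ℤ := fun n => (Finset.Ico (0:ℤ) n).filter (fun b => n ∣ b^2 + a^2)
    with hSolDef
  have hsub : F ⊆ Ds.biUnion (fun d => (Sol (z / d^2)).image (fun b => (d, b))) := by
    intro p hp
    rw [hFdef, Finset.mem_filter, Finset.mem_product, Finset.mem_Icc, Finset.mem_Ico] at hp
    obtain ⟨⟨⟨hd1, hdz⟩, hb0, hbz⟩, hdvd, hblt, hbdvd⟩ := hp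
    rw [Finset.mem_biUnion]
    refine ⟨p.1, by rw [hDs]; exact Finset.mem_filter.mpr ⟨Finset.mem_Icc.mpr ⟨hd1, hdz⟩, hdvd⟩, ?_⟩
    rw [Finset.mem_image]
    exact ⟨p.2, Finset.mem_filter.mpr ⟨Finset.mem_Ico.mpr ⟨hb0, hblt⟩, hbdvd⟩, rfl⟩
  have hztnat : (z.toNat : ℤ) = z := Int.toNat_of_nonneg hz.le
  have hznt : z.toNat ≠ 0 := by omega
  have hGpos : 0 < Int.gcd z (4*a^2) := by
    rcases Nat.eq_zero_or_pos (Int.gcd z (4*a^2)) with h | h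
    · exact absurd (Int.gcd_eq_zero_iff.mp h).1 (ne_of_gt hz)
    · exact h
  have hper : ∀ d ∈ Ds, ((Sol (z / d^2)).image (fun b => (d, b))).card ≤
      z.toNat.divisors.card * (2 * Nat.sqrt (Int.gcd z (4*a^2))) := by
    intro d hd
    rw [hDs, Finset.mem_filter, Finset.mem_Icc] at hd
    obtain ⟨⟨hd1, hdz⟩, hdvd⟩ := hd
    set n : ℤ := z / d^2 with hn
    have hz' : n * d^2 = z := Int.ediv_mul_cancel hdvd
    have hnpos : 0 < n := by nlinarith
    have hndvd : n ∣ z := ⟨d^2, hz'.symm⟩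
    have hntnat : (n.toNat : ℤ) = n := Int.toNat_of_nonneg hnpos.le
    have hτ : n.toNat.divisors.card ≤ z.toNat.divisors.card := by
      apply Finset.card_le_card
      apply Nat.divisors_subset_of_dvd hznt
      have : (n.toNat : ℤ) ∣ (z.toNat : ℤ) := by rw [hntnat, hztnat]; exact hndvd
      exact_mod_cast this
    have hsqrt : Nat.sqrt (Int.gcd n (4*a^2)) ≤ Nat.sqrt (Int.gcd z (4*a^2)) := by
      apply Nat.sqrt_le_sqrt
      apply Nat.le_of_dvd hGpos
      apply Nat.dvd_gcd
      · exact dvd_trans (Nat.gcd_dvd_left _ _) (Int.natAbs_dvd_natAbs.mpr hndvd)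
      · exact Nat.gcd_dvd_right _ _
    calc ((Sol n).image (fun b => (d, b))).card ≤ (Sol n).card := Finset.card_image_le
      _ ≤ n.toNat.divisors.card * (2 * Nat.sqrt (Int.gcd n (4*a^2))) := sol_bound n a hnpos
      _ ≤ z.toNat.divisors.card * (2 * Nat.sqrt (Int.gcd z (4*a^2))) := by
          exact Nat.mul_le_mul hτ (Nat.mul_le_mul_left 2 hsqrt)
  have hDscard : Ds.card ≤ z.toNat.divisors.card := by
    apply Finset.card_le_card_of_injOn (fun d => d.toNat)
    · intro d hd
      rw [hDs, Finset.mem_coe, Finset.mem_filter, Finset.mem_Icc] at hd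
      obtain ⟨⟨hd1, hdz⟩, hdvd⟩ := hd
      rw [Finset.mem_coe, Nat.mem_divisors]
      constructor
      · have hddvd : d ∣ z := dvd_trans (dvd_pow_self d (by norm_num)) hdvd
        have : (d.toNat : ℤ) ∣ (z.toNat : ℤ) := by
          rw [Int.toNat_of_nonneg (by linarith), hztnat]; exact hddvd
        exact_mod_cast this
      · exact hznt
    · intro d hd e he hde
      simp only [hDs, Finset.mem_coe, Finset.mem_filter, Finset.mem_Icc] at hd he
      simp only at hde
      omega
  calc F.card ≤ ∑ d ∈ Ds, ((Sol (z / d^2)).image (fun b => (d, b))).card :=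
        le_trans (Finset.card_le_card hsub) Finset.card_biUnion_le
    _ ≤ ∑ _d ∈ Ds, z.toNat.divisors.card * (2 * Nat.sqrt (Int.gcd z (4*a^2))) :=
        Finset.sum_le_sum hper
    _ = Ds.card * (z.toNat.divisors.card * (2 * Nat.sqrt (Int.gcd z (4*a^2)))) := by
        rw [Finset.sum_const, smul_eq_mul]
    _ ≤ _ := Nat.mul_le_mul_right _ hDscard

theorem count_classes_representing (ε : ℝ) (hε : 0 < ε) :
    ∃ K : ℝ, 0 < K ∧
      ∀ a z : ℤ, a ≠ 0 → 0 < z →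
        (Nat.card (Quot (fun f g : { f : ℤ × ℤ × ℤ //
            Int.gcd f.1 (Int.gcd f.2.1 f.2.2) = 1 ∧
            f.2.1 ^ 2 - f.1 * f.2.2 = -a ^ 2 ∧
            ∃ m n : ℤ, evalBQF f m n = z } => SL2Equiv f.1 g.1)) : ℝ)
          ≤ K * (z : ℝ) ^ ε * ((Int.gcd z (4 * a ^ 2) : ℝ)) ^ ((1 : ℝ) / 2) := by
  obtain ⟨K₀, hK₀1, hK₀⟩ := tau_bound (ε/2) (by linarith)
  refine ⟨2 * K₀^2, by positivity, fun a z ha hz => ?_⟩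
  have hznt : z.toNat ≠ 0 := by omega
  have hztnat : (z.toNat : ℝ) = (z : ℝ) := by exact_mod_cast Int.toNat_of_nonneg hz.le
  set G : ℕ := Int.gcd z (4 * a ^ 2) with hG
  have hGpos : 0 < G := by
    rcases Nat.eq_zero_or_pos G with h | h
    · exact absurd (Int.gcd_eq_zero_iff.mp h).1 (ne_of_gt hz)
    · exact h
  have hτ : (z.toNat.divisors.card : ℝ) ≤ K₀ * (z:ℝ)^(ε/2) := by
    have := hK₀ z.toNat hznt
    rwa [hztnat] at this
  have hτ0 : (0:ℝ) ≤ (z.toNat.divisors.card : ℝ) := by positivity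
  have hs : ((Nat.sqrt G : ℝ)) ≤ ((G:ℝ)) ^ ((1:ℝ)/2) := by
    rw [← Real.sqrt_eq_rpow]
    rw [Real.le_sqrt (by positivity) (by positivity)]
    exact_mod_cast Nat.sqrt_le' G
  have hs0 : (0:ℝ) ≤ ((Nat.sqrt G : ℝ)) := by positivity
  calc (Nat.card (Quot (fun f g : { f : ℤ × ℤ × ℤ //
          Int.gcd f.1 (Int.gcd f.2.1 f.2.2) = 1 ∧
          f.2.1 ^ 2 - f.1 * f.2.2 = -a ^ 2 ∧
          ∃ m n : ℤ, evalBQF f m n = z } => SL2Equiv f.1 g.1)) : ℝ)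
      ≤ ((z.toNat.divisors.card * (z.toNat.divisors.card * (2 * Nat.sqrt G)) : ℕ) : ℝ) := by
        exact_mod_cast card_bound a z hz
    _ = (z.toNat.divisors.card : ℝ) * ((z.toNat.divisors.card : ℝ) * (2 * (Nat.sqrt G : ℝ))) := by
        push_cast; ring
    _ ≤ (K₀ * (z:ℝ)^(ε/2)) * ((K₀ * (z:ℝ)^(ε/2)) * (2 * ((G:ℝ)) ^ ((1:ℝ)/2))) := by
        have hz2 : (0:ℝ) ≤ K₀ * (z:ℝ)^(ε/2) := by positivity
        apply mul_le_mul hτ _ (by positivity) hz2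
        apply mul_le_mul hτ _ (by positivity) hz2
        apply mul_le_mul_of_nonneg_left hs (by norm_num)
    _ = (2 * K₀^2) * ((z:ℝ)^(ε/2) * (z:ℝ)^(ε/2)) * ((G:ℝ)) ^ ((1:ℝ)/2) := by ring
    _ = 2 * K₀^2 * (z:ℝ)^ε * ((G:ℝ)) ^ ((1:ℝ)/2) := by
        rw [← Real.rpow_add (by exact_mod_cast hz : (0:ℝ) < (z:ℝ))]
        norm_num
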